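/- Consider the ODE ω̇₃ = -ω₃ θ̇ sin θ · (mR²I₃(α - cos θ) + mR²I₁ cos θ)/(mR²I₃(α - cos θ)² + I₁I₃ + mR²I₁ sin²θ) along smooth curves θ(t), ω₃(t). Then D(t) = I₃ ω₃(t)·[I₁I₃ + mR²I₃(α - cos θ(t))² + mR²I₁ sin²θ(t)]^{1/2} is constant in t. -/

import Mathlib

theorem routh_integral_conserved
    (m R I₁ I₃ α : ℝ) (hm : 0 < m) (hR : 0 < R) (hI₁ : 0 < I₁) (hI₃ : 0 < I₃)
    (hα : 0 < α) (hα1 : α < 1)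
    (θ ω₃ θ' : ℝ → ℝ)
    (hθ : ∀ t, HasDerivAt θ (θ' t) t)
    (hω : ∀ t, HasDerivAt ω₃
      (-(ω₃ t) * θ' t * Real.sin (θ t) *
        (m * R ^ 2 * I₃ * (α - Real.cos (θ t)) + m * R ^ 2 * I₁ * Real.cos (θ t)) /
        (m * R ^ 2 * I₃ * (α - Real.cos (θ t)) ^ 2 + I₁ * I₃ +
          m * R ^ 2 * I₁ * Real.sin (θ t) ^ 2)) t) :
    ∀ s t : ℝ,
      I₃ * ω₃ s * Real.sqrt (I₁ * I₃ + m * R ^ 2 * I₃ * (α - Real.cos (θ s)) ^ 2 +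
          m * R ^ 2 * I₁ * Real.sin (θ s) ^ 2)
      = I₃ * ω₃ t * Real.sqrt (I₁ * I₃ + m * R ^ 2 * I₃ * (α - Real.cos (θ t)) ^ 2 +
          m * R ^ 2 * I₁ * Real.sin (θ t) ^ 2) := by
  set Q : ℝ → ℝ := fun t => I₁ * I₃ + m * R ^ 2 * I₃ * (α - Real.cos (θ t)) ^ 2 +
      m * R ^ 2 * I₁ * Real.sin (θ t) ^ 2 with hQdef
  have hQpos : ∀ t, 0 < Q t := by
    intro t
    have h1 : 0 ≤ m * R ^ 2 * I₃ * (α - Real.cos (θ t)) ^ 2 := by positivity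
    have h2 : 0 ≤ m * R ^ 2 * I₁ * Real.sin (θ t) ^ 2 := by positivity
    have h3 : 0 < I₁ * I₃ := by positivity
    simp only [hQdef]; linarith
  have key : ∀ t, HasDerivAt (fun t => ω₃ t * Real.sqrt (Q t)) 0 t := by
    intro t
    have hc : HasDerivAt (fun t => Real.cos (θ t)) (-Real.sin (θ t) * θ' t) t :=
      (Real.hasDerivAt_cos (θ t)).comp t (hθ t)
    have hs : HasDerivAt (fun t => Real.sin (θ t)) (Real.cos (θ t) * θ' t) t :=
      (Real.hasDerivAt_sin (θ t)).comp t (hθ t)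
    have hQ' : HasDerivAt Q
        (2 * θ' t * Real.sin (θ t) *
          (m * R ^ 2 * I₃ * (α - Real.cos (θ t)) + m * R ^ 2 * I₁ * Real.cos (θ t))) t := by
      have h1 : HasDerivAt (fun t => (α - Real.cos (θ t)) ^ 2)
          (2 * (α - Real.cos (θ t)) * (0 - (-Real.sin (θ t) * θ' t))) t := by
        have := ((hasDerivAt_const t α).fun_sub hc).fun_pow 2
        simpa [mul_comm] using this
      have h2 : HasDerivAt (fun t => Real.sin (θ t) ^ 2)
          (2 * Real.sin (θ t) * (Real.cos (θ t) * θ' t)) t := by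
        have := hs.fun_pow 2
        simpa [mul_comm] using this
      have := ((hasDerivAt_const t (I₁ * I₃)).fun_add
          ((hasDerivAt_const t (m * R ^ 2 * I₃)).fun_mul h1)).fun_add
          ((hasDerivAt_const t (m * R ^ 2 * I₁)).fun_mul h2)
      exact this.congr_deriv (Eq.symm (by
        ring))
    have hQne : Q t ≠ 0 := (hQpos t).ne'
    have hsqrt := hQ'.sqrt hQne
    have hmul := (hω t).fun_mul hsqrt
    have hsq2 : Real.sqrt (Q t) ^ 2 = Q t := Real.sq_sqrt (hQpos t).le
    have hsqne : Real.sqrt (Q t) ≠ 0 := (Real.sqrt_pos.mpr (hQpos t)).ne'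
    refine hmul.congr_deriv (Eq.symm ?_)
    have hden : (m * R ^ 2 * I₃ * (α - Real.cos (θ t)) ^ 2 + I₁ * I₃ +
        m * R ^ 2 * I₁ * Real.sin (θ t) ^ 2) = Q t := by simp only [hQdef]; ring
    rw [hden]
    field_simp
    linear_combination (ω₃ t * θ' t * Real.sin (θ t) *
      (m * R ^ 2 * I₃ * (α - Real.cos (θ t)) + m * R ^ 2 * I₁ * Real.cos (θ t))) * hsq2
  have hconst : ∀ s t : ℝ, ω₃ s * Real.sqrt (Q s) = ω₃ t * Real.sqrt (Q t) := by
    have hdiff : Differentiable ℝ (fun t => ω₃ t * Real.sqrt (Q t)) :=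
      fun t => (key t).differentiableAt
    have hderiv : ∀ t, deriv (fun t => ω₃ t * Real.sqrt (Q t)) t = 0 :=
      fun t => (key t).deriv
    exact fun s t => is_const_of_deriv_eq_zero hdiff hderiv s t
  intro s t
  have := hconst s t
  calc I₃ * ω₃ s * Real.sqrt (Q s) = I₃ * (ω₃ s * Real.sqrt (Q s)) := by ring
    _ = I₃ * (ω₃ t * Real.sqrt (Q t)) := by rw [this]
    _ = I₃ * ω₃ t * Real.sqrt (Q t) := by ring
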